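/- arXiv:2005.09204 — 3 statements merged into one kernel-verified Lean document; each statement's English description precedes it below -/
import Mathlib

section
/- Let n ≥ 2 and let (T, J) be an ℕ^n-pair with L₀ ⊆ J, where L₀ = {a ∈ ℕ^n : some coordinate is 0}. Let a be the germ of T (the minimum of T \ {0} under the coordinatewise strict order). Then for every integer k ≥ 0, the set (ka + L_a) ∩ T contains at most one element, where L_a = ℕ^n \ (ℕ^n + a). -/
open Pointwise

/-- Unique decompositions: every sum `a + b` with `a ∈ A`, `b ∈ B` determines `a` and `b`. -/
def UniqueSumsOn {α : Type*} [Add α] (A B : Set α) : Prop :=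
  ∀ a ∈ A, ∀ b ∈ B, ∀ a' ∈ A, ∀ b' ∈ B, a + b = a' + b' → a = a' ∧ b = b'

/-- `C = A ⊕ B`: `C` is the direct sum of `A` and `B`. -/
def IsDirectSum {α : Type*} [Add α] (A B C : Set α) : Prop :=
  C = A + B ∧ UniqueSumsOn A B


/-- `L_a = ℕ^n \ (ℕ^n + a)`. -/
def La {n : ℕ} (a : Fin n → ℕ) : Set (Fin n → ℕ) :=
  Set.univ \ {x | ∃ y : Fin n → ℕ, x = y + a}

theorem stmt9 {n : ℕ} (hn : 2 ≤ n) (T J : Set (Fin n → ℕ))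
    (h : IsDirectSum T J Set.univ)
    (hL : {x : Fin n → ℕ | ∃ i, x i = 0} ⊆ J)
    (a : Fin n → ℕ) (haT : a ∈ T) (hapos : ∀ i, 0 < a i)
    (hmin : ∀ b ∈ T, b ≠ 0 → b ≠ a → ∀ i, a i < b i) :
    ∀ k : ℕ, Set.Subsingleton ({x | ∃ ℓ ∈ La a, x = k • a + ℓ} ∩ T) := by
  obtain ⟨hcov, huniq⟩ := h
  -- L_a ⊆ J
  have hLaJ : La a ⊆ J := by
    intro ℓ hℓ
    obtain ⟨t, ht, j, hj, htj⟩ : ℓ ∈ T + J := by rw [← hcov]; trivial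
    simp only [] at htj
    have htj : t + j = ℓ := htj
    rcases eq_or_ne t 0 with h0 | h0
    · subst h0; rw [← htj]; simpa using hj
    · exfalso
      have hale : ∀ i, a i ≤ t i := by
        rcases eq_or_ne t a with rfl | hne
        · intro i; exact le_refl _
        · intro i; exact le_of_lt (hmin t ht h0 hne i)
      apply hℓ.2
      refine ⟨fun i => ℓ i - a i, funext fun i => ?_⟩
      have : a i ≤ ℓ i := by
        have := hale i
        have : ℓ i = t i + j i := by rw [← htj]; rfl
        omega
      simp only [Pi.add_apply]
      omega
  intro k x hx y hy
  obtain ⟨⟨ℓ₁, hℓ₁, hx1⟩, hxT⟩ := hx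
  obtain ⟨⟨ℓ₂, hℓ₂, hy1⟩, hyT⟩ := hy
  have key : x + ℓ₂ = y + ℓ₁ := by
    subst hx1; subst hy1; abel
  exact (huniq x hxT ℓ₂ (hLaJ hℓ₂) y hyT ℓ₁ (hLaJ hℓ₁) key).1
end

section
/- Let n ≥ 2 and let (T, J) be an ℕ^n-pair such that L₀ ⊆ J, where L₀ = {x ∈ ℕ^n : some coordinate of x is 0}. Let a ∈ (ℕ\{0})^n be the germ of T, i.e., the minimum of T\{0} under the coordinatewise strict order. Then there exists an ℕ-pair (A, B) (A ⊕ B = ℕ, A, B ⊆ ℕ) such that T = {k·a : k ∈ A} and J = {k·a : k ∈ B} ⊕ L_a, where L_a = ℕ^n \ (ℕ^n + a). -/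
open Pointwise

section Aux
variable {n : ℕ}

-- canonical decomposition
lemma canon (hn : 2 ≤ n) (a : Fin n → ℕ) (hapos : ∀ i, 0 < a i) (x : Fin n → ℕ) :
    ∃ k : ℕ, ∃ s : Fin n → ℕ, x = k • a + s ∧ ∃ i, s i < a i := by
  have hne : (Finset.univ : Finset (Fin n)).Nonempty := ⟨⟨0, by omega⟩, Finset.mem_univ _⟩
  set k := Finset.univ.inf' hne (fun i => x i / a i) with hk
  have hkle : ∀ i, k * a i ≤ x i := by
    intro i
    have h1 : k ≤ x i / a i := Finset.inf'_le _ (Finset.mem_univ i)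
    exact (Nat.le_div_iff_mul_le (hapos i)).1 h1
  refine ⟨k, fun i => x i - k * a i, ?_, ?_⟩
  · funext i
    have := hkle i
    simp only [Pi.add_apply, Pi.smul_apply, smul_eq_mul]
    omega
  · obtain ⟨i0, -, hi0⟩ := Finset.exists_mem_eq_inf' hne (fun i => x i / a i)
    refine ⟨i0, ?_⟩
    show x i0 - k * a i0 < a i0
    have hdm := Nat.div_add_mod (x i0) (a i0)
    have hml := Nat.mod_lt (x i0) (hapos i0)
    have : k = x i0 / a i0 := hi0
    have h2 : k * a i0 = a i0 * (x i0 / a i0) := by rw [this, Nat.mul_comm]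
    omega

lemma key (hn : 2 ≤ n) (T J : Set (Fin n → ℕ))
    (h : IsDirectSum T J Set.univ)
    (a : Fin n → ℕ) (haT : a ∈ T) (hapos : ∀ i, 0 < a i)
    (hmin : ∀ b ∈ T, b ≠ 0 → b ≠ a → ∀ i, a i < b i) :
    ∀ k : ℕ,
      (∀ s : Fin n → ℕ, (∃ i, s i < a i) → k • a + s ∈ T → s = 0) ∧
      (k • a ∈ J → ∀ s : Fin n → ℕ, (∃ i, s i < a i) → k • a + s ∈ J) ∧
      (∀ s : Fin n → ℕ, (∃ i, s i < a i) → k • a + s ∈ J → k • a ∈ J) := by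
  obtain ⟨hTJ, huniq⟩ := h
  have i0 : Fin n := ⟨0, by omega⟩
  have decomp : ∀ x : Fin n → ℕ, ∃ t ∈ T, ∃ j ∈ J, t + j = x := by
    intro x
    have : x ∈ T + J := by rw [← hTJ]; exact Set.mem_univ x
    simpa [Set.mem_add] using this
  have zero2 : (0 : Fin n → ℕ) ∈ T ∧ (0 : Fin n → ℕ) ∈ J := by
    obtain ⟨t, htT, j, hjJ, htj⟩ := decomp 0
    have ht0 : t = 0 := by
      funext i; have := congrFun htj i; simp only [Pi.add_apply, Pi.zero_apply] at this ⊢; omega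
    have hj0 : j = 0 := by
      funext i; have := congrFun htj i; simp only [Pi.add_apply, Pi.zero_apply] at this ⊢; omega
    exact ⟨ht0 ▸ htT, hj0 ▸ hjJ⟩
  obtain ⟨zeroT, zeroJ⟩ := zero2
  have tge : ∀ t ∈ T, t ≠ 0 → ∀ i, a i ≤ t i := by
    intro t htT ht0 i
    by_cases hta : t = a
    · rw [hta]
    · exact le_of_lt (hmin t htT ht0 hta i)
  have LsubJ : ∀ r : Fin n → ℕ, (∃ i, r i < a i) → r ∈ J := by
    intro r ⟨i, hi⟩
    obtain ⟨t, htT, j, hjJ, htj⟩ := decomp r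
    have ht0 : t = 0 := by
      by_contra ht0
      have h1 := tge t htT ht0 i
      have h2 := congrFun htj i
      simp only [Pi.add_apply] at h2
      omega
    rw [ht0, zero_add] at htj
    exact htj ▸ hjJ
  have TJ0 : ∀ x : Fin n → ℕ, x ∈ T → x ∈ J → x = 0 := by
    intro x hxT hxJ
    have := huniq x hxT 0 zeroJ 0 zeroT x hxJ (by simp)
    exact this.1.symm ▸ this.1
  intro k
  induction k using Nat.strong_induction_on with
  | _ k IH =>
  -- decomposition of k • a
  have hdec : ∃ m, m ≤ k ∧ m • a ∈ T ∧ (k - m) • a ∈ J := by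
    obtain ⟨t, htT, j, hjJ, htj⟩ := decomp (k • a)
    obtain ⟨m, s₁, ht, hstrip₁⟩ := canon hn a hapos t
    have htle : ∀ i, m * a i + s₁ i ≤ k * a i := by
      intro i
      have h1 := congrFun htj i
      have h2 := congrFun ht i
      simp only [Pi.add_apply, Pi.smul_apply, smul_eq_mul] at h1 h2
      omega
    have hmk : m ≤ k := by
      have h1 := htle i0
      have h2 : m * a i0 ≤ k * a i0 := by omega
      exact Nat.le_of_mul_le_mul_right (by simpa [Nat.mul_comm] using h2) (hapos i0)
    rcases Nat.lt_or_ge m k with hmlt | hmge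
    · have hs₁0 : s₁ = 0 := (IH m hmlt).1 s₁ hstrip₁ (ht ▸ htT)
      rw [hs₁0, add_zero] at ht
      have hj : j = (k - m) • a := by
        funext i
        have h1 := congrFun htj i
        have h2 := congrFun ht i
        simp only [Pi.add_apply, Pi.smul_apply, smul_eq_mul] at h1 h2 ⊢
        have h3 : (k - m) * a i = k * a i - m * a i := Nat.sub_mul k m (a i)
        have h4 : m * a i ≤ k * a i := Nat.mul_le_mul_right (a i) hmk
        omega
      exact ⟨m, hmk, ht ▸ htT, hj ▸ hjJ⟩
    · have hmk' : m = k := le_antisymm hmk hmge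
      subst hmk'
      have hs₁0 : s₁ = 0 := by
        funext i
        have := htle i
        simp only [Pi.zero_apply]
        omega
      rw [hs₁0, add_zero] at ht
      refine ⟨m, le_rfl, ht ▸ htT, ?_⟩
      simp only [Nat.sub_self, zero_smul]
      exact zeroJ
  obtain ⟨m, hmk, hmT, hdJ⟩ := hdec
  -- joint P/Q induction on the size of s
  have PQ : ∀ N : ℕ, ∀ s : Fin n → ℕ, (∑ i, s i) ≤ N →
      ((∃ i, s i < a i) → k • a + s ∈ T → s = 0) ∧
      (k • a ∈ J → (∃ i, s i < a i) → k • a + s ∈ J) := by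
    intro N
    induction N using Nat.strong_induction_on with
    | _ N IHN =>
    have Pk : ∀ s : Fin n → ℕ, (∑ i, s i) ≤ N → (∃ i, s i < a i) → k • a + s ∈ T → s = 0 := by
      intro s hsum hstrip hsT
      by_contra hs0
      obtain ⟨p, hp⟩ : ∃ p, 0 < s p := by
        by_contra hc
        push_neg at hc
        exact hs0 (funext fun i => Nat.le_zero.1 (hc i))
      rcases Nat.eq_zero_or_pos k with hk | hk
      · subst hk
        rw [zero_smul, zero_add] at hsT
        obtain ⟨q, hq⟩ := hstrip
        have := tge s hsT hs0 q
        omega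
      rcases Nat.lt_or_ge m k with hmlt | hmge
      · rcases Nat.eq_zero_or_pos m with hm0 | hm1
        · -- m = 0 : k • a ∈ J, the hard case
          subst hm0
          simp only [Nat.sub_zero] at hdJ
          set r : Fin n → ℕ := fun i => a i - s i with hrdef
          set s₂ : Fin n → ℕ := fun i => s i - a i with hs₂def
          have hrstrip : ∃ i, r i < a i := ⟨p, by have := hapos p; simp only [hrdef]; omega⟩
          have hs₂strip : ∃ i, s₂ i < a i := by
            obtain ⟨q, hq⟩ := hstrip
            exact ⟨q, by have := hapos q; simp only [hs₂def]; omega⟩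
          have hsumlt : (∑ i, s₂ i) < ∑ i, s i := by
            apply Finset.sum_lt_sum (fun i _ => by simp only [hs₂def]; omega)
            exact ⟨p, Finset.mem_univ p, by have := hapos p; simp only [hs₂def]; omega⟩
          have hQ := (IHN (∑ i, s₂ i) (lt_of_lt_of_le hsumlt hsum) s₂ le_rfl).2 hdJ hs₂strip
          have heq : (k • a + s) + r = a + (k • a + s₂) := by
            funext i
            have := hapos i
            simp only [Pi.add_apply, Pi.smul_apply, smul_eq_mul, hrdef, hs₂def]
            omega
          have huq := huniq _ hsT r (LsubJ r hrstrip) a haT _ hQ heq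
          have h1 := congrFun huq.1 p
          simp only [Pi.add_apply, Pi.smul_apply, smul_eq_mul] at h1
          have h2 : a p ≤ k * a p := by
            calc a p = 1 * a p := (one_mul _).symm
            _ ≤ k * a p := Nat.mul_le_mul_right (a p) hk
          omega
        · -- 0 < m < k
          have hdQ := (IH (k - m) (by omega)).2.1 hdJ s hstrip
          have heq : k • a + s + 0 = m • a + ((k - m) • a + s) := by
            funext i
            simp only [Pi.add_apply, Pi.smul_apply, smul_eq_mul, Pi.zero_apply]
            have h3 : (k - m) * a i = k * a i - m * a i := Nat.sub_mul k m (a i)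
            have h4 : m * a i ≤ k * a i := Nat.mul_le_mul_right (a i) hmk
            omega
          have huq := huniq _ hsT 0 zeroJ _ hmT _ hdQ heq
          have h1 := congrFun huq.2 i0
          simp only [Pi.add_apply, Pi.smul_apply, smul_eq_mul, Pi.zero_apply] at h1
          have h2 : 0 < (k - m) * a i0 := Nat.mul_pos (by omega) (hapos i0)
          omega
      · -- m = k : k • a ∈ T
        have hmk' : m = k := le_antisymm hmk hmge
        subst hmk'
        have huq := huniq _ hsT 0 zeroJ _ hmT s (LsubJ s hstrip) (by simp)
        exact hs0 huq.2.symm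
    refine fun s hsum => ⟨Pk s hsum, ?_⟩
    intro hkaJ hstrip
    rcases Nat.eq_zero_or_pos k with hk | hk
    · subst hk
      rw [zero_smul, zero_add]
      exact LsubJ s hstrip
    obtain ⟨t, htT, j, hjJ, htj⟩ := decomp (k • a + s)
    obtain ⟨m₂, s₂, ht, hstrip₂⟩ := canon hn a hapos t
    have htle : ∀ i, m₂ * a i + s₂ i ≤ k * a i + s i := by
      intro i
      have h1 := congrFun htj i
      have h2 := congrFun ht i
      simp only [Pi.add_apply, Pi.smul_apply, smul_eq_mul] at h1 h2
      omega
    obtain ⟨q, hq⟩ := id hstrip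
    have hm₂k : m₂ ≤ k := by
      have h1 := htle q
      have h2 : m₂ * a q < (k + 1) * a q := by
        have h3 : (k + 1) * a q = k * a q + a q := Nat.succ_mul k (a q)
        omega
      by_contra hc
      have : (k + 1) * a q ≤ m₂ * a q := Nat.mul_le_mul_right (a q) (by omega)
      omega
    rcases Nat.eq_zero_or_pos m₂ with hm₂0 | hm₂1
    · -- t ∈ strip: t = 0
      subst hm₂0
      rw [zero_smul, zero_add] at ht
      have ht0 : t = 0 := by
        by_contra ht0
        obtain ⟨i, hi⟩ := hstrip₂
        have := tge t htT ht0 i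
        rw [ht] at this
        omega
      rw [ht0, zero_add] at htj
      exact htj ▸ hjJ
    rcases Nat.lt_or_ge m₂ k with hm₂lt | hm₂ge
    · -- 0 < m₂ < k : contradiction
      exfalso
      have hs₂0 : s₂ = 0 := (IH m₂ hm₂lt).1 s₂ hstrip₂ (ht ▸ htT)
      rw [hs₂0, add_zero] at ht
      have hj : j = (k - m₂) • a + s := by
        funext i
        have h1 := congrFun htj i
        have h2 := congrFun ht i
        simp only [Pi.add_apply, Pi.smul_apply, smul_eq_mul] at h1 h2 ⊢
        have h3 : (k - m₂) * a i = k * a i - m₂ * a i := Nat.sub_mul k m₂ (a i)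
        have h4 : m₂ * a i ≤ k * a i := Nat.mul_le_mul_right (a i) (le_of_lt hm₂lt)
        omega
      have hdJ₂ : (k - m₂) • a ∈ J := (IH (k - m₂) (by omega)).2.2 s hstrip (hj ▸ hjJ)
      have heq : (0 : Fin n → ℕ) + k • a = m₂ • a + (k - m₂) • a := by
        funext i
        simp only [Pi.add_apply, Pi.smul_apply, smul_eq_mul, Pi.zero_apply]
        have h3 : (k - m₂) * a i = k * a i - m₂ * a i := Nat.sub_mul k m₂ (a i)
        have h4 : m₂ * a i ≤ k * a i := Nat.mul_le_mul_right (a i) (le_of_lt hm₂lt)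
        omega
      have huq := huniq 0 zeroT (k • a) hkaJ (m₂ • a) (ht ▸ htT) ((k - m₂) • a) hdJ₂ heq
      have h1 := congrFun huq.1 i0
      simp only [Pi.smul_apply, smul_eq_mul, Pi.zero_apply] at h1
      have h2 : 0 < m₂ * a i0 := Nat.mul_pos hm₂1 (hapos i0)
      omega
    · -- m₂ = k
      exfalso
      have hm₂k' : m₂ = k := le_antisymm hm₂k hm₂ge
      subst hm₂k'
      have hs₂le : ∀ i, s₂ i ≤ s i := by
        intro i
        have := htle i
        omega
      have hs₂0 : s₂ = 0 := Pk s₂ (le_trans (Finset.sum_le_sum fun i _ => hs₂le i) hsum)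
        hstrip₂ (ht ▸ htT)
      rw [hs₂0, add_zero] at ht
      have := TJ0 (m₂ • a) (ht ▸ htT) hkaJ
      have h1 := congrFun this i0
      simp only [Pi.smul_apply, smul_eq_mul, Pi.zero_apply] at h1
      have h2 : 0 < m₂ * a i0 := Nat.mul_pos hm₂1 (hapos i0)
      omega
  have Pfull : ∀ s : Fin n → ℕ, (∃ i, s i < a i) → k • a + s ∈ T → s = 0 :=
    fun s h1 h2 => (PQ (∑ i, s i) s le_rfl).1 h1 h2
  have Qfull : k • a ∈ J → ∀ s : Fin n → ℕ, (∃ i, s i < a i) → k • a + s ∈ J :=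
    fun hJ s h1 => (PQ (∑ i, s i) s le_rfl).2 hJ h1
  refine ⟨Pfull, Qfull, ?_⟩
  intro s hstrip hsJ
  rcases Nat.eq_zero_or_pos m with hm0 | hm1
  · subst hm0
    simpa using hdJ
  · exfalso
    have hdQ := (IH (k - m) (by omega)).2.1 hdJ s hstrip
    have heq : (0 : Fin n → ℕ) + (k • a + s) = m • a + ((k - m) • a + s) := by
      funext i
      simp only [Pi.add_apply, Pi.smul_apply, smul_eq_mul, Pi.zero_apply]
      have h3 : (k - m) * a i = k * a i - m * a i := Nat.sub_mul k m (a i)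
      have h4 : m * a i ≤ k * a i := Nat.mul_le_mul_right (a i) hmk
      omega
    have huq := huniq 0 zeroT _ hsJ (m • a) hmT _ hdQ heq
    have h1 := congrFun huq.1 i0
    simp only [Pi.smul_apply, smul_eq_mul, Pi.zero_apply] at h1
    have h2 : 0 < m * a i0 := Nat.mul_pos hm1 (hapos i0)
    omega

end Aux

theorem stmt10 {n : ℕ} (hn : 2 ≤ n) (T J : Set (Fin n → ℕ))
    (h : IsDirectSum T J Set.univ)
    (hL : {x : Fin n → ℕ | ∃ i, x i = 0} ⊆ J)
    (a : Fin n → ℕ) (haT : a ∈ T) (hapos : ∀ i, 0 < a i)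
    (hmin : ∀ b ∈ T, b ≠ 0 → b ≠ a → ∀ i, a i < b i) :
    ∃ A B : Set ℕ, IsDirectSum A B Set.univ ∧
      T = {x | ∃ k ∈ A, x = k • a} ∧
      IsDirectSum {x : Fin n → ℕ | ∃ k ∈ B, x = k • a} (La a) J := by
  have hkey := key hn T J h a haT hapos hmin
  obtain ⟨hTJ, huniq⟩ := h
  have i0 : Fin n := ⟨0, by omega⟩
  have decomp : ∀ x : Fin n → ℕ, ∃ t ∈ T, ∃ j ∈ J, t + j = x := by
    intro x
    have : x ∈ T + J := by rw [← hTJ]; exact Set.mem_univ x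
    simpa [Set.mem_add] using this
  have mem_La : ∀ x : Fin n → ℕ, x ∈ La a ↔ ∃ i, x i < a i := by
    intro x
    constructor
    · rintro ⟨-, hx⟩
      by_contra hc
      push_neg at hc
      exact hx ⟨fun i => x i - a i, funext fun i => by
        simp only [Pi.add_apply]
        have := hc i
        omega⟩
    · rintro ⟨i, hi⟩
      refine ⟨Set.mem_univ x, ?_⟩
      rintro ⟨y, hy⟩
      have := congrFun hy i
      simp only [Pi.add_apply] at this
      omega
  -- decomposition of multiples
  have decompMul : ∀ k : ℕ, ∃ m, m ≤ k ∧ m • a ∈ T ∧ (k - m) • a ∈ J := by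
    intro k
    obtain ⟨t, htT, j, hjJ, htj⟩ := decomp (k • a)
    obtain ⟨m, s₁, ht, hstrip₁⟩ := canon hn a hapos t
    have hs₁0 : s₁ = 0 := (hkey m).1 s₁ hstrip₁ (ht ▸ htT)
    rw [hs₁0, add_zero] at ht
    have htle : ∀ i, m * a i ≤ k * a i := by
      intro i
      have h1 := congrFun htj i
      have h2 := congrFun ht i
      simp only [Pi.add_apply, Pi.smul_apply, smul_eq_mul] at h1 h2
      omega
    have hmk : m ≤ k := by
      have h1 := htle i0
      exact Nat.le_of_mul_le_mul_right (by simpa [Nat.mul_comm] using h1) (hapos i0)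
    have hj : j = (k - m) • a := by
      funext i
      have h1 := congrFun htj i
      have h2 := congrFun ht i
      simp only [Pi.add_apply, Pi.smul_apply, smul_eq_mul] at h1 h2 ⊢
      have h3 : (k - m) * a i = k * a i - m * a i := Nat.sub_mul k m (a i)
      have h4 : m * a i ≤ k * a i := Nat.mul_le_mul_right (a i) hmk
      omega
    exact ⟨m, hmk, ht ▸ htT, hj ▸ hjJ⟩
  have smul_inj : ∀ k k' : ℕ, k • a = k' • a → k = k' := by
    intro k k' hkk
    have := congrFun hkk i0
    simp only [Pi.smul_apply, smul_eq_mul] at this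
    exact Nat.eq_of_mul_eq_mul_right (hapos i0) this
  refine ⟨{k | k • a ∈ T}, {k | k • a ∈ J}, ⟨?_, ?_⟩, ?_, ?_, ?_⟩
  · -- univ = A + B
    ext k
    simp only [Set.mem_univ, true_iff, Set.mem_add, Set.mem_setOf_eq]
    obtain ⟨m, hmk, hmT, hdJ⟩ := decompMul k
    exact ⟨m, hmT, k - m, hdJ, by omega⟩
  · -- UniqueSumsOn A B
    intro k₁ h₁ k₂ h₂ k₁' h₁' k₂' h₂' heq
    have heq2 : k₁ • a + k₂ • a = k₁' • a + k₂' • a := by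
      rw [← add_smul, ← add_smul, heq]
    have huq := huniq _ h₁ _ h₂ _ h₁' _ h₂' heq2
    have hk1 := smul_inj _ _ huq.1
    exact ⟨hk1, by omega⟩
  · -- T = multiples by A
    ext x
    simp only [Set.mem_setOf_eq]
    constructor
    · intro hxT
      obtain ⟨k, s, hx, hstrip⟩ := canon hn a hapos x
      have hs0 : s = 0 := (hkey k).1 s hstrip (hx ▸ hxT)
      rw [hs0, add_zero] at hx
      exact ⟨k, hx ▸ hxT, hx⟩
    · rintro ⟨k, hkT, rfl⟩
      exact hkT
  · -- J = Bmultiples + La a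
    ext x
    simp only [Set.mem_add, Set.mem_setOf_eq]
    constructor
    · intro hxJ
      obtain ⟨k, s, hx, hstrip⟩ := canon hn a hapos x
      have hkJ : k • a ∈ J := (hkey k).2.2 s hstrip (hx ▸ hxJ)
      exact ⟨k • a, ⟨k, hkJ, rfl⟩, s, (mem_La s).2 hstrip, hx.symm⟩
    · rintro ⟨u, ⟨k, hkJ, rfl⟩, v, hv, rfl⟩
      exact (hkey k).2.1 hkJ v ((mem_La v).1 hv)
  · -- UniqueSumsOn Bmultiples (La a)
    rintro u ⟨k, -, rfl⟩ v hv u' ⟨k', -, rfl⟩ v' hv' heq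
    obtain ⟨q, hq⟩ := (mem_La v).1 hv
    obtain ⟨q', hq'⟩ := (mem_La v').1 hv'
    have hco : ∀ i, k * a i + v i = k' * a i + v' i := by
      intro i
      have := congrFun heq i
      simpa only [Pi.add_apply, Pi.smul_apply, smul_eq_mul] using this
    have hk'k : k' ≤ k := by
      by_contra hc
      have h1 : (k + 1) * a q ≤ k' * a q := Nat.mul_le_mul_right (a q) (by omega)
      have h2 : (k + 1) * a q = k * a q + a q := Nat.succ_mul k (a q)
      have := hco q
      omega
    have hkk' : k ≤ k' := by
      by_contra hc
      have h1 : (k' + 1) * a q' ≤ k * a q' := Nat.mul_le_mul_right (a q') (by omega)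
      have h2 : (k' + 1) * a q' = k' * a q' + a q' := Nat.succ_mul k' (a q')
      have := hco q'
      omega
    have hkeq : k = k' := le_antisymm hkk' hk'k
    subst hkeq
    refine ⟨rfl, funext fun i => ?_⟩
    have := hco i
    omega
end

section
/- Let a ∈ ℕ^n with all coordinates positive, n ≥ 1. Let A₀, B₀ ⊆ ℕ with {0,1} ⊆ A₀ and 0 ∈ B₀. Set F₀ = A₀·a = {k·a : k ∈ A₀} and G₀ = B₀·a ⊕ L_a, where L_a = ℕ^n \ (ℕ^n + a). Let Ω ⊆ ℕ·a and suppose F₁, G₁ ⊆ ℕ^n are sets such that (F₀ ⊕ G₁) ∪ (F₁ ⊕ G₀) = Ω ⊕ L_a, the union is disjoint, and both sums F₀ + G₁, F₁ + G₀ and Ω + L_a are direct. Then F₁ = A₁·a and G₁ = B₁·a ⊕ L_a for some subsets A₁, B₁ ⊆ ℕ. -/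
open Pointwise

lemma mem_La_iff {n : ℕ} (a : Fin n → ℕ) (ℓ : Fin n → ℕ) : ℓ ∈ La a ↔ ∃ i, ℓ i < a i := by
  simp only [La, Set.mem_diff, Set.mem_univ, true_and, Set.mem_setOf_eq]
  constructor
  · intro h
    by_contra hc
    push_neg at hc
    exact h ⟨fun i => ℓ i - a i, funext fun i => by have := hc i; simp [Pi.add_apply]; omega⟩
  · rintro ⟨i, hi⟩ ⟨y, hy⟩
    have := congrFun hy i
    simp [Pi.add_apply] at this
    omega

lemma unique_decomp {n : ℕ} (a : Fin n → ℕ) (ha : ∀ i, 0 < a i) {k k' : ℕ}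
    {ℓ ℓ' : Fin n → ℕ} (h : ℓ ∈ La a) (h' : ℓ' ∈ La a)
    (he : k • a + ℓ = k' • a + ℓ') : k = k' ∧ ℓ = ℓ' := by
  obtain ⟨i, hi⟩ := (mem_La_iff a ℓ).1 h
  obtain ⟨i', hi'⟩ := (mem_La_iff a ℓ').1 h'
  have hxi := congrFun he i
  have hxi' := congrFun he i'
  simp only [Pi.add_apply, Pi.smul_apply, smul_eq_mul] at hxi hxi'
  have hk : k = k' := by
    rcases lt_trichotomy k k' with h | h | h
    · exfalso
      have h2 : (k + 1) * a i ≤ k' * a i := Nat.mul_le_mul_right _ h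
      rw [add_mul, one_mul] at h2
      omega
    · exact h
    · exfalso
      have h2 : (k' + 1) * a i' ≤ k * a i' := Nat.mul_le_mul_right _ h
      rw [add_mul, one_mul] at h2
      omega
  subst hk
  exact ⟨rfl, add_left_cancel he⟩

lemma exists_decomp {n : ℕ} (hn : 1 ≤ n) (a : Fin n → ℕ) (ha : ∀ i, 0 < a i)
    (x : Fin n → ℕ) : ∃ (k : ℕ) (ℓ : Fin n → ℕ), ℓ ∈ La a ∧ x = k • a + ℓ := by
  have hne : (Finset.univ : Finset (Fin n)).Nonempty := ⟨⟨0, hn⟩, Finset.mem_univ _⟩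
  obtain ⟨i₀, -, hmin⟩ := Finset.exists_min_image Finset.univ (fun i => x i / a i) hne
  refine ⟨(x i₀ / a i₀ : ℕ), fun i => x i - x i₀ / a i₀ * a i, ?_, ?_⟩
  · rw [mem_La_iff]
    refine ⟨i₀, ?_⟩
    have h1 := Nat.div_add_mod (x i₀) (a i₀)
    have h2 := Nat.mod_lt (x i₀) (ha i₀)
    have h3 : x i₀ / a i₀ * a i₀ = a i₀ * (x i₀ / a i₀) := Nat.mul_comm _ _
    omega
  · funext i
    have hle : x i₀ / a i₀ * a i ≤ x i := by
      calc x i₀ / a i₀ * a i ≤ x i / a i * a i :=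
            Nat.mul_le_mul_right _ (hmin i (Finset.mem_univ i))
        _ ≤ x i := Nat.div_mul_le_self _ _
    simp only [Pi.add_apply, Pi.smul_apply, smul_eq_mul]
    omega

theorem stmt19 {n : ℕ} (hn : 1 ≤ n) (a : Fin n → ℕ) (ha : ∀ i, 0 < a i)
    (A₀ B₀ : Set ℕ) (h0 : 0 ∈ A₀) (h1 : 1 ∈ A₀) (hB : 0 ∈ B₀)
    (F₀ G₀ : Set (Fin n → ℕ))
    (hF₀ : F₀ = {x | ∃ k ∈ A₀, x = k • a})
    (hG₀ : G₀ = {x : Fin n → ℕ | ∃ k ∈ B₀, x = k • a} + La a)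
    (hG₀d : UniqueSumsOn {x : Fin n → ℕ | ∃ k ∈ B₀, x = k • a} (La a))
    (Ω : Set (Fin n → ℕ)) (hΩ : Ω ⊆ {x | ∃ k : ℕ, x = k • a})
    (F₁ G₁ : Set (Fin n → ℕ))
    (hcover : (F₀ + G₁) ∪ (F₁ + G₀) = Ω + La a)
    (hdisj : Disjoint (F₀ + G₁) (F₁ + G₀))
    (hd₁ : UniqueSumsOn F₀ G₁) (hd₂ : UniqueSumsOn F₁ G₀)
    (hd₃ : UniqueSumsOn Ω (La a)) :
    ∃ A₁ B₁ : Set ℕ,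
      F₁ = {x | ∃ k ∈ A₁, x = k • a} ∧
      G₁ = {x : Fin n → ℕ | ∃ k ∈ B₁, x = k • a} + La a ∧
      UniqueSumsOn {x : Fin n → ℕ | ∃ k ∈ B₁, x = k • a} (La a) := by
  classical
  have i₀ : Fin n := ⟨0, hn⟩
  -- basic membership facts
  have h0La : (0 : Fin n → ℕ) ∈ La a := (mem_La_iff a 0).2 ⟨i₀, by simpa using ha i₀⟩
  have hF₀mem : ∀ j : ℕ, j ∈ A₀ → (j • a) ∈ F₀ := by
    intro j hj; rw [hF₀]; exact ⟨j, hj, rfl⟩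
  have h0F₀ : (0 : Fin n → ℕ) ∈ F₀ := by
    have := hF₀mem 0 h0; simpa using this
  have haF₀ : a ∈ F₀ := by
    have := hF₀mem 1 h1; simpa using this
  have hG₀mem : ∀ m : ℕ, m ∈ B₀ → ∀ ℓ ∈ La a, m • a + ℓ ∈ G₀ := by
    intro m hm ℓ hℓ; rw [hG₀]; exact Set.add_mem_add ⟨m, hm, rfl⟩ hℓ
  have h0G₀ : (0 : Fin n → ℕ) ∈ G₀ := by
    have := hG₀mem 0 hB 0 h0La; simpa using this
  have hsub₁ : F₀ + G₁ ⊆ Ω + La a := hcover ▸ Set.subset_union_left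
  have hsub₂ : F₁ + G₀ ⊆ Ω + La a := hcover ▸ Set.subset_union_right
  have hcases : ∀ x ∈ Ω + La a, x ∈ F₀ + G₁ ∨ x ∈ F₁ + G₀ := by
    intro x hx; rw [← hcover] at hx; exact hx
  have hdisj' : ∀ x : Fin n → ℕ, x ∈ F₀ + G₁ → x ∈ F₁ + G₀ → False :=
    fun x h1' h2' => Set.disjoint_left.mp hdisj h1' h2'
  -- Ω characterization
  have hOm : ∀ (k : ℕ) (ℓ : Fin n → ℕ), ℓ ∈ La a → k • a + ℓ ∈ Ω + La a → k • a ∈ Ω := by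
    intro k ℓ hℓ hx
    obtain ⟨ω, hω, ℓω, hℓω, hsum⟩ := Set.mem_add.mp hx
    obtain ⟨m, hm⟩ := hΩ hω
    rw [hm] at hsum
    obtain ⟨hk, -⟩ := unique_decomp a ha hℓω hℓ hsum
    rw [hk] at hm
    rwa [← hm]
  have hkΩ : ∀ (k : ℕ) (ℓf : Fin n → ℕ), ℓf ∈ La a → k • a + ℓf ∈ F₁ → k • a ∈ Ω := by
    intro k ℓf hLf hf
    have h1' : k • a + ℓf ∈ F₁ + G₀ := by
      have := Set.add_mem_add hf h0G₀; rwa [add_zero] at this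
    exact hOm k ℓf hLf (hsub₂ h1')
  have hgΩ : ∀ (k : ℕ) (ℓ₀ : Fin n → ℕ), ℓ₀ ∈ La a → k • a + ℓ₀ ∈ G₁ → k • a ∈ Ω := by
    intro k ℓ₀ hL0 hg
    have h1' : k • a + ℓ₀ ∈ F₀ + G₁ := by
      have := Set.add_mem_add h0F₀ hg; rwa [zero_add] at this
    exact hOm k ℓ₀ hL0 (hsub₁ h1')
  -- main induction
  have main : ∀ k : ℕ,
      (∀ ℓf ∈ La a, k • a + ℓf ∈ F₁ → ℓf = 0) ∧
      (∀ ℓ₀ ∈ La a, k • a + ℓ₀ ∈ G₁ → ∀ ℓ ∈ La a, k • a + ℓ ∈ G₁) := by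
    intro k
    induction k using Nat.strong_induction_on with
    | _ k IH =>
    -- F-part
    have hFk : ∀ ℓf ∈ La a, k • a + ℓf ∈ F₁ → ℓf = 0 := by
      have key : ∀ m : ℕ, ∀ ℓf ∈ La a, k • a + ℓf ∈ F₁ → (∑ i, ℓf i) ≤ m → ℓf = 0 := by
        intro m
        induction m with
        | zero =>
          intro ℓf _ _ hs
          funext i
          have h0' : ∑ i, ℓf i = 0 := Nat.le_zero.mp hs
          have := Finset.sum_eq_zero_iff.mp h0' i (Finset.mem_univ i)
          simpa using this
        | succ m ih =>
          intro ℓf hLf hf hs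
          by_contra hne
          obtain ⟨i, hi⟩ : ∃ i, ℓf i ≠ 0 := by
            by_contra h
            push_neg at h
            exact hne (funext fun i => h i)
          set ℓ' : Fin n → ℕ := fun j => if j = i then a i - 1 else a j with hℓ'def
          set ℓ'' : Fin n → ℕ := fun j => if j = i then ℓf i - 1 else ℓf j with hℓ''def
          have hℓ'La : ℓ' ∈ La a := (mem_La_iff a ℓ').2 ⟨i, by simp [hℓ'def]; have := ha i; omega⟩
          have hℓ''La : ℓ'' ∈ La a := by
            obtain ⟨j, hj⟩ := (mem_La_iff a ℓf).1 hLf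
            refine (mem_La_iff a ℓ'').2 ⟨j, ?_⟩
            by_cases h : j = i
            · subst h; simp [hℓ''def]; omega
            · simp [hℓ''def, h]; omega
          have hsum'' : ∑ j, ℓ'' j < ∑ j, ℓf j := by
            refine Finset.sum_lt_sum (fun j _ => ?_) ⟨i, Finset.mem_univ i, ?_⟩
            · by_cases h : j = i
              · subst h; simp [hℓ''def]
              · simp [hℓ''def, h]
            · simp [hℓ''def]; omega
          have hadd : ℓf + ℓ' = a + ℓ'' := by
            funext j
            by_cases h : j = i
            · subst h; simp [Pi.add_apply, hℓ'def, hℓ''def]; have := ha j; omega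
            · simp [Pi.add_apply, hℓ'def, hℓ''def, h]; omega
          have hz : (k + 1) • a + ℓ'' ∈ F₁ + G₀ := by
            have h1' : (k • a + ℓf) + ℓ' ∈ F₁ + G₀ := by
              refine Set.add_mem_add hf ?_
              have := hG₀mem 0 hB ℓ' hℓ'La; simpa using this
            have heq : (k • a + ℓf) + ℓ' = (k + 1) • a + ℓ'' := by
              rw [add_assoc, hadd, add_smul, one_smul]
              abel
            rwa [heq] at h1'
          have hkΩ' : k • a ∈ Ω := hkΩ k ℓf hLf hf
          have hnotG₁ : k • a + ℓ'' ∉ G₁ := by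
            intro hgg
            have h1' : (k + 1) • a + ℓ'' ∈ F₀ + G₁ := by
              have := Set.add_mem_add haF₀ hgg
              have heq : a + (k • a + ℓ'') = (k + 1) • a + ℓ'' := by
                rw [add_smul, one_smul]; abel
              rwa [heq] at this
            exact hdisj' _ h1' hz
          have hy : k • a + ℓ'' ∈ Ω + La a := Set.add_mem_add hkΩ' hℓ''La
          rcases hcases _ hy with hcase | hcase
          · -- y ∈ F₀ + G₁
            obtain ⟨u, hu, g', hg', huv⟩ := Set.mem_add.mp hcase
            rw [hF₀] at hu
            obtain ⟨j, hj, rfl⟩ := hu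
            obtain ⟨k₂, w₂, hw₂La, hg'eq⟩ := exists_decomp hn a ha g'
            have heq2 : (j + k₂) • a + w₂ = k • a + ℓ'' := by
              rw [add_smul, add_assoc, ← hg'eq]; exact huv
            obtain ⟨hk2, hl2⟩ := unique_decomp a ha hw₂La hℓ''La heq2
            rcases Nat.eq_zero_or_pos j with hj0 | hjpos
            · apply hnotG₁
              have : g' = k • a + ℓ'' := by
                rw [hg'eq, hl2, show k₂ = k by omega]
              rwa [← this]
            · have hk2lt : k₂ < k := by omega
              have hsat : k₂ • a + ℓf ∈ G₁ :=
                (IH k₂ hk2lt).2 w₂ hw₂La (hg'eq ▸ hg') ℓf hLf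
              have hmem1 : k • a + ℓf ∈ F₀ + G₁ := by
                have := Set.add_mem_add (hF₀mem j hj) hsat
                have heq : j • a + (k₂ • a + ℓf) = k • a + ℓf := by
                  rw [← add_assoc, ← add_smul, hk2]
                rwa [heq] at this
              have hmem2 : k • a + ℓf ∈ F₁ + G₀ := by
                have := Set.add_mem_add hf h0G₀; rwa [add_zero] at this
              exact hdisj' _ hmem1 hmem2
          · -- y ∈ F₁ + G₀
            obtain ⟨f', hf', g₀, hg₀, huv⟩ := Set.mem_add.mp hcase
            rw [hG₀] at hg₀
            obtain ⟨u, hu, ℓ₂, hℓ₂La, huv2⟩ := Set.mem_add.mp hg₀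
            obtain ⟨m', hm', rfl⟩ := hu
            obtain ⟨k₁, w₁, hw₁La, hf'eq⟩ := exists_decomp hn a ha f'
            obtain ⟨c, ℓ₃, hℓ₃La, hceq⟩ := exists_decomp hn a ha (w₁ + ℓ₂)
            have heq3 : (k₁ + m' + c) • a + ℓ₃ = k • a + ℓ'' := by
              calc (k₁ + m' + c) • a + ℓ₃ = (k₁ • a + m' • a) + (c • a + ℓ₃) := by
                    rw [add_smul, add_smul]; abel
                _ = (k₁ • a + m' • a) + (w₁ + ℓ₂) := by rw [← hceq]
                _ = (k₁ • a + w₁) + (m' • a + ℓ₂) := by abel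
                _ = f' + g₀ := by rw [← hf'eq, huv2]
                _ = k • a + ℓ'' := huv
            obtain ⟨hksum, hl3⟩ := unique_decomp a ha hℓ₃La hℓ''La heq3
            have hk₁le : k₁ ≤ k := by omega
            rcases eq_or_lt_of_le hk₁le with hk₁eq | hk₁lt
            · -- k₁ = k, so m' = c = 0
              have hm0 : m' = 0 ∧ c = 0 := by omega
              have hsum13 : w₁ + ℓ₂ = ℓ'' := by
                rw [hceq, hm0.2, zero_smul, zero_add, hl3]
              by_cases hw0 : w₁ = 0
              · have hf'' : f' = k • a := by
                  rw [hf'eq, hw0, add_zero, hk₁eq]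
                have hℓfG₀ : (0:ℕ) • a + ℓf ∈ G₀ := hG₀mem 0 hB ℓf hLf
                have hℓfG₀' : ℓf ∈ G₀ := by simpa using hℓfG₀
                have h2 := hd₂ (k • a + ℓf) hf 0 h0G₀ f' hf' ℓf hℓfG₀'
                  (by rw [add_zero, hf''])
                have := h2.1
                rw [hf''] at this
                have : ℓf = 0 := by
                  have h3 : k • a + ℓf = k • a + 0 := by rw [this, add_zero]
                  exact add_left_cancel h3
                exact hne this
              · have h1' : ∀ j, w₁ j ≤ ℓ'' j := fun j => by
                  have := congrFun hsum13 j
                  simp only [Pi.add_apply] at this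
                  omega
                have hle : ∑ i, w₁ i ≤ m := by
                  have hA : ∑ j, w₁ j ≤ ∑ j, ℓ'' j :=
                    Finset.sum_le_sum fun j _ => h1' j
                  omega
                have hf1 : k • a + w₁ ∈ F₁ := by
                  rw [← hk₁eq, ← hf'eq]; exact hf'
                exact hw0 (ih w₁ hw₁La hf1 hle)
            · -- k₁ < k
              have hw0 : w₁ = 0 := (IH k₁ hk₁lt).1 w₁ hw₁La (hf'eq ▸ hf')
              have hc0 : c = 0 ∧ ℓ₂ = ℓ₃ := by
                have hzz : (0:ℕ) • a + ℓ₂ = c • a + ℓ₃ := by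
                  rw [zero_smul, zero_add, ← hceq, hw0, zero_add]
                have := unique_decomp a ha hℓ₂La hℓ₃La hzz
                exact ⟨this.1.symm, this.2⟩
              have hrep2 : f' + (m' • a + ℓf) = k • a + ℓf := by
                rw [hf'eq, hw0, add_zero, ← add_assoc, ← add_smul,
                  show k₁ + m' = k by omega]
              have h2 := hd₂ (k • a + ℓf) hf 0 h0G₀ f' hf' (m' • a + ℓf)
                (hG₀mem m' hm' ℓf hLf) (by rw [add_zero, hrep2])
              have h3 : k • a + ℓf = k₁ • a + 0 := by
                rw [add_zero, h2.1, hf'eq, hw0, add_zero]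
              have := (unique_decomp a ha hLf h0La h3).1
              omega
      intro ℓf hLf hf
      exact key (∑ i, ℓf i) ℓf hLf hf le_rfl
    -- G-part
    have hGk : ∀ ℓ₀ ∈ La a, k • a + ℓ₀ ∈ G₁ → ∀ ℓ ∈ La a, k • a + ℓ ∈ G₁ := by
      intro ℓ₀ hL0 hg ℓ hLℓ
      have hkΩ' : k • a ∈ Ω := hgΩ k ℓ₀ hL0 hg
      have hx : k • a + ℓ ∈ Ω + La a := Set.add_mem_add hkΩ' hLℓ
      rcases hcases _ hx with hcase | hcase
      · obtain ⟨u, hu, g', hg', huv⟩ := Set.mem_add.mp hcase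
        rw [hF₀] at hu
        obtain ⟨j, hj, rfl⟩ := hu
        obtain ⟨k₂, w₂, hw₂La, hg'eq⟩ := exists_decomp hn a ha g'
        have heq2 : (j + k₂) • a + w₂ = k • a + ℓ := by
          rw [add_smul, add_assoc, ← hg'eq]; exact huv
        obtain ⟨hk2, hl2⟩ := unique_decomp a ha hw₂La hLℓ heq2
        rcases Nat.eq_zero_or_pos j with hj0 | hjpos
        · have : g' = k • a + ℓ := by
            rw [hg'eq, hl2, show k₂ = k by omega]
          rwa [← this]
        · exfalso
          have hk2lt : k₂ < k := by omega
          have hsat : k₂ • a + ℓ₀ ∈ G₁ :=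
            (IH k₂ hk2lt).2 w₂ hw₂La (hg'eq ▸ hg') ℓ₀ hL0
          have heqel : (0 : Fin n → ℕ) + (k • a + ℓ₀) = j • a + (k₂ • a + ℓ₀) := by
            rw [zero_add, ← add_assoc, ← add_smul, hk2]
          have h2 := hd₁ 0 h0F₀ (k • a + ℓ₀) hg (j • a) (hF₀mem j hj)
            (k₂ • a + ℓ₀) hsat heqel
          have := congrFun h2.1 i₀
          simp only [Pi.zero_apply, Pi.smul_apply, smul_eq_mul] at this
          have := ha i₀
          nlinarith
      · exfalso
        obtain ⟨f', hf', g₀, hg₀, huv⟩ := Set.mem_add.mp hcase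
        rw [hG₀] at hg₀
        obtain ⟨u, hu, ℓ₂, hℓ₂La, huv2⟩ := Set.mem_add.mp hg₀
        obtain ⟨m', hm', rfl⟩ := hu
        obtain ⟨k₁, w₁, hw₁La, hf'eq⟩ := exists_decomp hn a ha f'
        obtain ⟨c, ℓ₃, hℓ₃La, hceq⟩ := exists_decomp hn a ha (w₁ + ℓ₂)
        have heq3 : (k₁ + m' + c) • a + ℓ₃ = k • a + ℓ := by
          calc (k₁ + m' + c) • a + ℓ₃ = (k₁ • a + m' • a) + (c • a + ℓ₃) := by
                rw [add_smul, add_smul]; abel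
            _ = (k₁ • a + m' • a) + (w₁ + ℓ₂) := by rw [← hceq]
            _ = (k₁ • a + w₁) + (m' • a + ℓ₂) := by abel
            _ = f' + g₀ := by rw [← hf'eq, huv2]
            _ = k • a + ℓ := huv
        obtain ⟨hksum, hl3⟩ := unique_decomp a ha hℓ₃La hLℓ heq3
        have hk₁le : k₁ ≤ k := by omega
        have hw0 : w₁ = 0 := by
          rcases eq_or_lt_of_le hk₁le with hk₁eq | hk₁lt
          · exact hFk w₁ hw₁La (by rw [← hk₁eq, ← hf'eq]; exact hf')
          · exact (IH k₁ hk₁lt).1 w₁ hw₁La (hf'eq ▸ hf')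
        have hc0 : c = 0 := by
          have hzz : (0:ℕ) • a + ℓ₂ = c • a + ℓ₃ := by
            rw [zero_smul, zero_add, ← hceq, hw0, zero_add]
          exact (unique_decomp a ha hℓ₂La hℓ₃La hzz).1.symm
        have hmem2 : k • a + ℓ₀ ∈ F₁ + G₀ := by
          have := Set.add_mem_add hf' (hG₀mem m' hm' ℓ₀ hL0)
          have heq : f' + (m' • a + ℓ₀) = k • a + ℓ₀ := by
            rw [hf'eq, hw0, add_zero, ← add_assoc, ← add_smul,
              show k₁ + m' = k by omega]
          rwa [heq] at this
        have hmem1 : k • a + ℓ₀ ∈ F₀ + G₁ := by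
          have := Set.add_mem_add h0F₀ hg; rwa [zero_add] at this
        exact hdisj' _ hmem1 hmem2
    exact ⟨hFk, hGk⟩
  -- assemble the answer
  refine ⟨{k : ℕ | k • a ∈ F₁}, {k : ℕ | k • a ∈ G₁}, ?_, ?_, ?_⟩
  · ext x
    constructor
    · intro hx
      obtain ⟨k, w₁, hwLa, hxeq⟩ := exists_decomp hn a ha x
      have hw0 : w₁ = 0 := (main k).1 w₁ hwLa (hxeq ▸ hx)
      have hxk : x = k • a := by rw [hxeq, hw0, add_zero]
      exact ⟨k, show k • a ∈ F₁ from hxk ▸ hx, hxk⟩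
    · rintro ⟨k, hk, rfl⟩
      exact hk
  · ext x
    constructor
    · intro hx
      obtain ⟨k, w₁, hwLa, hxeq⟩ := exists_decomp hn a ha x
      have hk : k • a ∈ G₁ := by
        have := (main k).2 w₁ hwLa (hxeq ▸ hx) 0 h0La
        rwa [add_zero] at this
      rw [hxeq]
      exact Set.add_mem_add ⟨k, hk, rfl⟩ hwLa
    · intro hx
      obtain ⟨u, hu, v, hvLa, huv⟩ := Set.mem_add.mp hx
      obtain ⟨k, hk, rfl⟩ := hu
      have hk' : k • a + 0 ∈ G₁ := by rwa [add_zero]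
      have := (main k).2 0 h0La hk' v hvLa
      rwa [huv] at this
  · intro u hu v hv u' hu' v' hv' heq
    obtain ⟨k, hk, rfl⟩ := hu
    obtain ⟨k', hk', rfl⟩ := hu'
    obtain ⟨hkk, hvv⟩ := unique_decomp a ha hv hv' heq
    exact ⟨by rw [hkk], hvv⟩
end
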